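/- arXiv:1906.03805 — 3 statements merged into one kernel-verified Lean document; each statement's English description precedes it below -/
import Mathlib

section
/- Let V be a finite index set, {w_j}_{j∈V} ⊂ R^d, h ∈ R^d nonzero, i ∈ V, and ε > 0. Then min over perturbations {δ_j}_{j∈V} with ‖δ_j‖ ≤ ε/2 of the softmax probability exp((w_i+δ_i)ᵀh) / Σ_j exp((w_j+δ_j)ᵀh) equals min over a single perturbation δ_i with ‖δ_i‖ ≤ ε of exp((w_i+δ_i)ᵀh) / (exp((w_i+δ_i)ᵀh) + Σ_{j≠i} exp(w_jᵀh)). -/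
open scoped RealInnerProductSpace
open Real Finset

private lemma adv_frac_mono {x x' c c' : ℝ} (hx' : 0 < x') (hx : x' ≤ x) (hc : 0 < c)
    (hc' : c ≤ c') : x' / (x' + c') ≤ x / (x + c) := by
  rw [div_le_div_iff₀ (by linarith) (by linarith)]
  nlinarith

theorem adv_softmax_perturb_reduction (d : ℕ) (V : Type*) [Fintype V] [DecidableEq V]
    [Nontrivial V] (w : V → EuclideanSpace ℝ (Fin d)) (h : EuclideanSpace ℝ (Fin d))
    (hh : h ≠ 0) (i : V) (ε : ℝ) (hε : 0 < ε) :
    sInf {x : ℝ | ∃ δ : V → EuclideanSpace ℝ (Fin d), (∀ j, ‖δ j‖ ≤ ε / 2) ∧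
        x = exp ⟪w i + δ i, h⟫ / ∑ j, exp ⟪w j + δ j, h⟫} =
    sInf {x : ℝ | ∃ δi : EuclideanSpace ℝ (Fin d), ‖δi‖ ≤ ε ∧
        x = exp ⟪w i + δi, h⟫ /
          (exp ⟪w i + δi, h⟫ + ∑ j ∈ univ.erase i, exp ⟪w j, h⟫)} := by
  classical
  have hn : 0 < ‖h‖ := norm_pos_iff.mpr hh
  set n := ‖h‖ with hn_def
  have hn0 : n ≠ 0 := hn.ne'
  obtain ⟨k, hk⟩ := exists_ne i
  have hS : (0:ℝ) < ∑ j ∈ univ.erase i, exp ⟪w j, h⟫ :=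
    Finset.sum_pos (fun _ _ => exp_pos _) ⟨k, Finset.mem_erase.mpr ⟨hk, Finset.mem_univ k⟩⟩
  set S := ∑ j ∈ univ.erase i, exp ⟪w j, h⟫ with hS_def
  set A := exp (⟪w i, h⟫ - ε * n) with hA_def
  have hA : 0 < A := exp_pos _
  have hinner : ∀ (c : ℝ) (x : EuclideanSpace ℝ (Fin d)),
      ⟪x + c • h, h⟫ = ⟪x, h⟫ + c * n ^ 2 := fun c x => by
    rw [inner_add_left, real_inner_smul_left, real_inner_self_eq_norm_sq]
  have harith1 : ∀ a : ℝ, a + -(ε/2)/n * n ^ 2 = a - ε/2 * n := fun a => by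
    field_simp; ring
  have harith2 : ∀ a : ℝ, a + (ε/2)/n * n ^ 2 = a + ε/2 * n := fun a => by
    field_simp
  have harith3 : ∀ a : ℝ, a + -ε/n * n ^ 2 = a - ε * n := fun a => by
    field_simp; ring
  -- key algebraic identity
  have key : ∀ t : ℝ, A / (A + S) =
      exp (⟪w i, h⟫ - ε * n + t) / (exp (⟪w i, h⟫ - ε * n + t) + exp t * S) := by
    intro t
    have h1 : exp (⟪w i, h⟫ - ε * n + t) = A * exp t := by rw [← exp_add]
    rw [div_eq_div_iff (by positivity) (by positivity), h1]
    ring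
  have key2 : A / (A + S) =
      exp (⟪w i, h⟫ - ε/2 * n) / (exp (⟪w i, h⟫ - ε/2 * n) + exp (ε/2 * n) * S) := by
    have harg : ⟪w i, h⟫ - ε * n + ε/2 * n = ⟪w i, h⟫ - ε/2 * n := by ring
    rw [key (ε/2 * n), harg]
  -- bound on inner products of perturbations
  have hbd : ∀ (δ : EuclideanSpace ℝ (Fin d)) (r : ℝ), ‖δ‖ ≤ r →
      -(r * n) ≤ ⟪δ, h⟫ ∧ ⟪δ, h⟫ ≤ r * n := by
    intro δ r hr
    have := abs_real_inner_le_norm δ h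
    have h2 : ‖δ‖ * ‖h‖ ≤ r * n := mul_le_mul_of_nonneg_right hr hn.le
    constructor
    · nlinarith [neg_abs_le ⟪δ, h⟫]
    · nlinarith [le_abs_self ⟪δ, h⟫]
  -- Left set equals M
  have hL : sInf {x : ℝ | ∃ δ : V → EuclideanSpace ℝ (Fin d), (∀ j, ‖δ j‖ ≤ ε / 2) ∧
      x = exp ⟪w i + δ i, h⟫ / ∑ j, exp ⟪w j + δ j, h⟫} = A / (A + S) := by
    have hmem : A / (A + S) ∈ {x : ℝ | ∃ δ : V → EuclideanSpace ℝ (Fin d),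
        (∀ j, ‖δ j‖ ≤ ε / 2) ∧ x = exp ⟪w i + δ i, h⟫ / ∑ j, exp ⟪w j + δ j, h⟫} := by
      refine ⟨fun j => if j = i then (-(ε/2)/n) • h else ((ε/2)/n) • h, ?_, ?_⟩
      · intro j
        show ‖(if j = i then (-(ε/2)/n) • h else ((ε/2)/n) • h)‖ ≤ ε / 2
        rcases eq_or_ne j i with hj | hj
        · rw [if_pos hj, norm_smul, Real.norm_eq_abs, abs_div, abs_of_pos hn,
            div_mul_cancel₀ _ hn0, abs_neg, abs_of_pos (by linarith)]
        · rw [if_neg hj, norm_smul, Real.norm_eq_abs, abs_div, abs_of_pos hn,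
            div_mul_cancel₀ _ hn0, abs_of_pos (by linarith)]
      · have hif : (if i = i then (-(ε/2)/n) • h else ((ε/2)/n) • h) = (-(ε/2)/n) • h :=
          if_pos rfl
        have hsum : ∑ j, exp ⟪w j + (if j = i then (-(ε/2)/n) • h else ((ε/2)/n) • h), h⟫
            = exp (⟪w i, h⟫ - (ε/2) * n) + exp ((ε/2) * n) * S := by
          rw [← Finset.add_sum_erase _ _ (Finset.mem_univ i)]
          congr 1
          · rw [hif, hinner, harith1]
          · rw [hS_def, Finset.mul_sum]
            apply Finset.sum_congr rfl
            intro j hj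
            rw [if_neg (Finset.mem_erase.mp hj).1, hinner, harith2, ← exp_add]
            congr 1
            ring
        rw [hsum]
        show A / (A + S) = exp ⟪w i + (if i = i then (-(ε/2)/n) • h else ((ε/2)/n) • h), h⟫ /
          (exp (⟪w i, h⟫ - (ε/2) * n) + exp ((ε/2) * n) * S)
        rw [hif, hinner, harith1, key2]
    apply le_antisymm
    · exact csInf_le ⟨0, fun x ⟨δ, hδ, hx⟩ => hx ▸ by positivity⟩ hmem
    · apply le_csInf ⟨_, hmem⟩
      rintro x ⟨δ, hδ, rfl⟩
      have hsum : ∑ j, exp ⟪w j + δ j, h⟫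
          = exp ⟪w i + δ i, h⟫ + ∑ j ∈ univ.erase i, exp ⟪w j + δ j, h⟫ :=
        (Finset.add_sum_erase _ _ (Finset.mem_univ i)).symm
      rw [hsum, key2]
      apply adv_frac_mono (exp_pos _)
      · rw [exp_le_exp, inner_add_left]
        have := (hbd (δ i) (ε/2) (hδ i)).1
        linarith
      · exact Finset.sum_pos (fun _ _ => exp_pos _)
          ⟨k, Finset.mem_erase.mpr ⟨hk, Finset.mem_univ k⟩⟩
      · rw [hS_def, Finset.mul_sum]
        apply Finset.sum_le_sum
        intro j hj
        rw [← exp_add, exp_le_exp, inner_add_left]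
        have := (hbd (δ j) (ε/2) (hδ j)).2
        linarith
  -- Right set equals M
  have hR : sInf {x : ℝ | ∃ δi : EuclideanSpace ℝ (Fin d), ‖δi‖ ≤ ε ∧
      x = exp ⟪w i + δi, h⟫ / (exp ⟪w i + δi, h⟫ + S)} = A / (A + S) := by
    have hmem : A / (A + S) ∈ {x : ℝ | ∃ δi : EuclideanSpace ℝ (Fin d), ‖δi‖ ≤ ε ∧
        x = exp ⟪w i + δi, h⟫ / (exp ⟪w i + δi, h⟫ + S)} := by
      refine ⟨(-ε/n) • h, ?_, ?_⟩
      · rw [norm_smul, Real.norm_eq_abs, abs_div, abs_of_pos hn, div_mul_cancel₀ _ hn0,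
          abs_neg, abs_of_pos hε]
      · rw [hinner, harith3, ← hA_def]
    apply le_antisymm
    · exact csInf_le ⟨0, fun x ⟨δ, hδ, hx⟩ => hx ▸ by positivity⟩ hmem
    · apply le_csInf ⟨_, hmem⟩
      rintro x ⟨δ, hδ, rfl⟩
      apply adv_frac_mono hA _ hS le_rfl
      rw [hA_def, exp_le_exp, inner_add_left]
      have := (hbd δ ε hδ).1
      linarith
  rw [hL, hR]
end

section
/- (Energy bound on adversarial softmax) AdvSoft_ε(i, w, h) ≤ σ(Φ(i, w, ‖h‖)), where σ(t) = 1/(1+e^{-t}) is the sigmoid and Φ(i, w, α) = -log Σ_{j≠i} exp(-α(‖w_i - w_j‖ - ε)). -/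
open scoped RealInnerProductSpace
open Real Finset

theorem advsoft_le_sigmoid_phi (d : ℕ) (V : Type*) [Fintype V] [DecidableEq V]
    [Nontrivial V] (w : V → EuclideanSpace ℝ (Fin d)) (h : EuclideanSpace ℝ (Fin d))
    (i : V) (ε : ℝ) (hε : 0 ≤ ε) :
    exp (⟪w i, h⟫ - ε * ‖h‖) /
        (exp (⟪w i, h⟫ - ε * ‖h‖) + ∑ j ∈ univ.erase i, exp ⟪w j, h⟫) ≤
      1 / (1 + exp (-(-(log (∑ j ∈ univ.erase i,
        exp (-(‖h‖ * (‖w i - w j‖ - ε)))))))) := by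
  obtain ⟨j₀, hj₀⟩ := exists_ne i
  have hne : (univ.erase i).Nonempty := ⟨j₀, mem_erase.mpr ⟨hj₀, mem_univ _⟩⟩
  set A := exp (⟪w i, h⟫ - ε * ‖h‖) with hA
  set S := ∑ j ∈ univ.erase i, exp ⟪w j, h⟫ with hS
  set T := ∑ j ∈ univ.erase i, exp (-(‖h‖ * (‖w i - w j‖ - ε))) with hT
  have hApos : 0 < A := exp_pos _
  have hSpos : 0 < S := Finset.sum_pos (fun j _ => exp_pos _) hne
  have hTpos : 0 < T := Finset.sum_pos (fun j _ => exp_pos _) hne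
  have hlog : exp (-(-(log T))) = T := by rw [neg_neg, exp_log hTpos]
  rw [hlog]
  have key : A * T ≤ S := by
    rw [Finset.mul_sum]
    apply Finset.sum_le_sum
    intro j _
    rw [← exp_add]
    apply exp_le_exp.mpr
    have hin : ⟪w i - w j, h⟫ ≤ ‖w i - w j‖ * ‖h‖ := real_inner_le_norm _ _
    rw [inner_sub_left] at hin
    nlinarith [hin]
  rw [div_le_div_iff₀ (by positivity) (by positivity)]
  nlinarith [key, hApos.le]
end

section
/- Suppose AdvSoft_ε(i, w, h) = p with 0 < p < 1 and h ≠ 0. Then min_{j≠i} ‖w_j - w_i‖ ≥ ε + (1/‖h‖)·log(p/(1-p)) whenever p ≥ 1/2. -/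
open scoped RealInnerProductSpace
open Real Finset

set_option maxHeartbeats 1000000 in
theorem advsoft_p_separation_bound (d : ℕ) (V : Type*) [Fintype V] [DecidableEq V]
    [Nontrivial V] (w : V → EuclideanSpace ℝ (Fin d)) (h : EuclideanSpace ℝ (Fin d))
    (hh : h ≠ 0) (i : V) (ε p : ℝ) (hε : 0 ≤ ε) (hp0 : 0 < p) (hp1 : p < 1)
    (hphalf : 1 / 2 ≤ p)
    (hadv : exp (⟪w i, h⟫ - ε * ‖h‖) /
        (exp (⟪w i, h⟫ - ε * ‖h‖) + ∑ j ∈ univ.erase i, exp ⟪w j, h⟫) = p) :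
    ∀ j, j ≠ i → ‖w j - w i‖ ≥ ε + (1 / ‖h‖) * log (p / (1 - p)) := by
  intro j hj
  set A := exp (⟪w i, h⟫ - ε * ‖h‖) with hA
  set S := ∑ k ∈ univ.erase i, exp ⟪w k, h⟫ with hS
  have hjmem : j ∈ univ.erase i := Finset.mem_erase.2 ⟨hj, Finset.mem_univ j⟩
  have hApos : 0 < A := exp_pos _
  have hSpos : 0 < S := Finset.sum_pos (fun k _ => exp_pos _) ⟨j, hjmem⟩
  have hhn : 0 < ‖h‖ := norm_pos_iff.2 hh
  have hden : A + S ≠ 0 := by positivity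
  rw [div_eq_iff hden] at hadv
  have hratio : p / (1 - p) = A / S := by
    rw [div_eq_div_iff (by linarith) hSpos.ne']
    linear_combination -hadv
  have hSle : exp ⟪w j, h⟫ ≤ S :=
    Finset.single_le_sum (f := fun k => exp ⟪w k, h⟫) (fun k _ => (exp_pos _).le) hjmem
  have hlog : log (p / (1 - p)) ≤ (⟪w i, h⟫ - ε * ‖h‖) - ⟪w j, h⟫ := by
    rw [hratio, log_div hApos.ne' hSpos.ne', hA, log_exp]
    have h1 : log (exp ⟪w j, h⟫) ≤ log S := Real.log_le_log (exp_pos _) hSle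
    rw [log_exp] at h1
    linarith
  have hinner : ⟪w i, h⟫ - ⟪w j, h⟫ ≤ ‖w j - w i‖ * ‖h‖ := by
    have h2 := real_inner_le_norm (w i - w j) h
    rw [inner_sub_left] at h2
    rw [norm_sub_rev]
    linarith
  have key : log (p / (1 - p)) ≤ (‖w j - w i‖ - ε) * ‖h‖ := by nlinarith
  rw [ge_iff_le]
  have h3 : (1 / ‖h‖) * log (p / (1 - p)) ≤ ‖w j - w i‖ - ε := by
    rw [one_div, inv_mul_le_iff₀ hhn, mul_comm]
    exact key
  linarith
end
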